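/- arXiv:2107.08583 — 5 statements merged into one kernel-verified Lean document; each statement's English description precedes it below -/
import Mathlib

section
/- Compositional invariants imply safety of the parameterized system: suppose θ_C ⊆ S_C and θ_U ⊆ S_C × S_U satisfy Initialization (c₀ ∈ θ_C and (c₀,u₀) ∈ θ_U), Consecution for synchronized actions (if c ∈ θ_C, (c,u) ∈ θ_U, and (c',u') = T_S(c,u,p), then c' ∈ θ_C and (c',u') ∈ θ_U), Consecution for internal actions (if c ∈ θ_C, (c,u) ∈ θ_U, and c' = T_I(c,p), then c' ∈ θ_C and (c',u) ∈ θ_U), and Non-Interference (if c ∈ θ_C, (c,u) ∈ θ_U, (c,v) ∈ θ_U, and (c',u') = T_S(c,u,p), then (c',v) ∈ θ_U). Then for every N and every state (c, u₁,...,u_N) reachable in the N-user SCUN, c ∈ θ_C and (c, uᵢ) ∈ θ_U for all i. -/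
/-- Reachability in the `N`-user instance of a synchronized control-user
network (SCUN): starting from `(c₀, u₀, …, u₀)`, an internal action updates
only the control state via `TI`, and a synchronized action `(p, i)` updates the
control state and the `i`-th user via `TS`, leaving other users unchanged. -/
inductive ScunReach {SC SU PI PS : Type*}
    (TI : SC → PI → SC) (TS : SC → SU → PS → SC × SU)
    (c₀ : SC) (u₀ : SU) (N : ℕ) : SC × (Fin N → SU) → Prop
  | init : ScunReach TI TS c₀ u₀ N (c₀, fun _ => u₀)
  | internal {c : SC} {u : Fin N → SU} (p : PI) :
      ScunReach TI TS c₀ u₀ N (c, u) → ScunReach TI TS c₀ u₀ N (TI c p, u)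
  | sync {c : SC} {u : Fin N → SU} (p : PS) (i : Fin N) :
      ScunReach TI TS c₀ u₀ N (c, u) →
      ScunReach TI TS c₀ u₀ N
        ((TS c (u i) p).1, Function.update u i (TS c (u i) p).2)

/-- Compositional invariants imply safety of the parameterized system: if
`θC, θU` satisfy Initialization, Consecution for synchronized and internal
actions, and Non-Interference, then in every `N`-user SCUN instance, every
reachable state `(c, u)` satisfies `θC c` and `θU c (u i)` for every user. -/
theorem stmt_7 {SC SU PI PS : Type*}
    (TI : SC → PI → SC) (TS : SC → SU → PS → SC × SU)
    (c₀ : SC) (u₀ : SU)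
    (θC : SC → Prop) (θU : SC → SU → Prop)
    (hInit : θC c₀ ∧ θU c₀ u₀)
    (hCons1 : ∀ c u p, θC c → θU c u →
      θC (TS c u p).1 ∧ θU (TS c u p).1 (TS c u p).2)
    (hCons2 : ∀ c u p, θC c → θU c u → θC (TI c p) ∧ θU (TI c p) u)
    (hNonInt : ∀ c u v p, θC c → θU c u → θU c v →
      θU (TS c u p).1 v) :
    ∀ (N : ℕ) (c : SC) (u : Fin N → SU),
      ScunReach TI TS c₀ u₀ N (c, u) → θC c ∧ ∀ i, θU c (u i) := by
  intro N c u h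
  have key : ∀ s : SC × (Fin N → SU), ScunReach TI TS c₀ u₀ N s →
      θC s.1 ∧ θU s.1 u₀ ∧ ∀ i, θU s.1 (s.2 i) := by
    intro s h
    induction h with
    | init => exact ⟨hInit.1, hInit.2, fun _ => hInit.2⟩
    | @internal c u p _ ih =>
      exact ⟨(hCons2 c u₀ p ih.1 ih.2.1).1, (hCons2 c u₀ p ih.1 ih.2.1).2,
        fun i => (hCons2 c (u i) p ih.1 (ih.2.2 i)).2⟩
    | @sync c u p i _ ih =>
      refine ⟨(hCons1 c (u i) p ih.1 (ih.2.2 i)).1,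
        hNonInt c (u i) u₀ p ih.1 (ih.2.2 i) ih.2.1, fun j => ?_⟩
      by_cases hj : j = i
      · subst hj
        simpa using (hCons1 c (u j) p ih.1 (ih.2.2 j)).2
      · simp only [Function.update_of_ne hj]
        exact hNonInt c (u i) (u j) p ih.1 (ih.2.2 i) (ih.2.2 j)
  exact ⟨(key (c, u) h).1, (key (c, u) h).2.2⟩
end

section
/- Under the hypotheses of the compositional invariant rule, if additionally every tuple (c, u₁, ..., u_k) with c ∈ θ_C and (c, uⱼ) ∈ θ_U for all j satisfies a k-user predicate φ, then every N-user SCUN instance satisfies φ as a k-universal safety property: for every reachable state (c, u) and every k-element subset {i₁,...,i_k} of [N], φ(c, u_{i₁},...,u_{i_k}) holds. -/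
/-- Under Initialization, Consecution (synchronized and internal) and
Non-Interference for `(θC, θU)`, if every tuple `(c, u₁, …, u_k)` with
`θC c` and `θU c uⱼ` for all `j` satisfies the `k`-user predicate `φ`, then
every `N`-user SCUN instance satisfies `φ` as a `k`-universal safety property:
for every reachable state `(c, u)` and every `k`-element subset of users
(given by an injective `idx : Fin k → Fin N`), `φ c (u ∘ idx)` holds. -/
theorem stmt_8 {SC SU PI PS : Type*} (k : ℕ)
    (TI : SC → PI → SC) (TS : SC → SU → PS → SC × SU)
    (c₀ : SC) (u₀ : SU)
    (θC : SC → Prop) (θU : SC → SU → Prop)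
    (φ : SC → (Fin k → SU) → Prop)
    (hInit : θC c₀ ∧ θU c₀ u₀)
    (hCons1 : ∀ c u p, θC c → θU c u →
      θC (TS c u p).1 ∧ θU (TS c u p).1 (TS c u p).2)
    (hCons2 : ∀ c u p, θC c → θU c u → θC (TI c p) ∧ θU (TI c p) u)
    (hNonInt : ∀ c u v p, θC c → θU c u → θU c v → θU (TS c u p).1 v)
    (hφ : ∀ (c : SC) (us : Fin k → SU), θC c → (∀ j, θU c (us j)) → φ c us) :
    ∀ (N : ℕ) (c : SC) (u : Fin N → SU),
      ScunReach TI TS c₀ u₀ N (c, u) →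
      ∀ idx : Fin k → Fin N, Function.Injective idx →
        φ c (fun j => u (idx j)) := by
  intro N c u hreach idx _
  suffices h : (θC c ∧ θU c u₀) ∧ ∀ i, θU c (u i) by
    exact hφ c _ h.1.1 (fun j => h.2 (idx j))
  clear hφ
  generalize hcu : (c, u) = s at hreach
  induction hreach generalizing c u with
  | init =>
    obtain ⟨rfl, rfl⟩ := Prod.mk.injEq .. ▸ hcu
    exact ⟨hInit, fun _ => hInit.2⟩
  | internal p _ ih =>
    obtain ⟨rfl, rfl⟩ := Prod.mk.injEq .. ▸ hcu
    obtain ⟨⟨h1, h0⟩, h2⟩ := ih _ _ rfl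
    exact ⟨hCons2 _ _ p h1 h0, fun i => (hCons2 _ _ p h1 (h2 i)).2⟩
  | sync p i _ ih =>
    obtain ⟨rfl, rfl⟩ := Prod.mk.injEq .. ▸ hcu
    obtain ⟨⟨h1, h0⟩, h2⟩ := ih _ _ rfl
    refine ⟨⟨(hCons1 _ _ p h1 (h2 i)).1, hNonInt _ _ _ p h1 (h2 i) h0⟩, fun j => ?_⟩
    rcases eq_or_ne j i with rfl | hne
    · simpa using (hCons1 _ _ p h1 (h2 j)).2
    · rw [Function.update_of_ne hne]
      exact hNonInt _ _ _ p h1 (h2 i) (h2 j)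
end

section
/- If for every action p and every pair of addresses x, y not in the implicit set I the transition function satisfies f(swap(s,x,y), swap(p,x,y)) = swap(f(s,p), x, y), then safety of any address-oblivious 1-universal property φ guarded only by literals in I is preserved under relabeling of non-implicit addresses: for any permutation σ of ℕ fixing I pointwise, a state s violates φ iff σ(s) violates φ. -/
/-- States reachable from a given state `s` under the transition function `f`
(by finitely many actions). -/
inductive ReachFrom {ι κ : Type*} (f : (ι → ℕ) → (κ → ℕ) → (ι → ℕ))
    (s : ι → ℕ) : (ι → ℕ) → Prop
  | refl : ReachFrom f s s
  | step {t : ι → ℕ} (p : κ → ℕ) : ReachFrom f s t → ReachFrom f s (f t p)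

private lemma key_comm {ι κ : Type*} (I : Set ℕ)
    (f : (ι → ℕ) → (κ → ℕ) → (ι → ℕ))
    (hcomm : ∀ x y : ℕ, x ∉ I → y ∉ I → ∀ (s : ι → ℕ) (p : κ → ℕ),
      f ((Equiv.swap x y) ∘ s) ((Equiv.swap x y) ∘ p) =
        (Equiv.swap x y) ∘ f s p) :
    ∀ (n : ℕ) (π : Equiv.Perm ℕ) (h : {a | π a ≠ a}.Finite),
      h.toFinset.card ≤ n → (∀ a ∈ I, π a = a) →
      ∀ (s : ι → ℕ) (p : κ → ℕ), f (⇑π ∘ s) (⇑π ∘ p) = ⇑π ∘ f s p := by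
  intro n
  induction n with
  | zero =>
    intro π h hcard hI s p
    have hempty : ∀ a, π a = a := by
      intro a
      by_contra ha
      have : a ∈ h.toFinset := by simp [ha]
      have := Finset.card_pos.mpr ⟨a, this⟩
      omega
    have hid : ⇑π = id := funext hempty
    simp [hid]
  | succ n ih =>
    intro π h hcard hI s p
    by_cases hemp : ∀ a, π a = a
    · have hid : ⇑π = id := funext hemp
      simp [hid]
    · push_neg at hemp
      obtain ⟨a, ha⟩ := hemp
      have haI : a ∉ I := fun hmem => ha (hI a hmem)
      have hpaI : π a ∉ I := by
        intro hmem
        exact ha (π.injective (hI _ hmem))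
      set τ := Equiv.swap a (π a) with hτ
      set σ := τ * π with hσ
      have hσa : σ a = a := by simp [hσ, hτ]
      have hσfix : ∀ x, π x = x → x ≠ a → σ x = x := by
        intro x hx hxa
        have hxpa : x ≠ π a := by
          intro hxe
          exact hxa (π.injective (by rw [← hxe, hx]))
        simp [hσ, hτ, hx, Equiv.swap_apply_of_ne_of_ne hxa hxpa]
      have hsub : {x | σ x ≠ x} ⊆ {x | π x ≠ x} \ {a} := by
        intro x hx
        constructor
        · intro hpx
          by_cases hxa : x = a
          · exact hx (hxa ▸ hσa)
          · exact hx (hσfix x hpx hxa)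
        · intro hxa
          exact hx ((Set.mem_singleton_iff.mp hxa) ▸ hσa)
      have hσfin : {x | σ x ≠ x}.Finite := (h.diff (t := {a})).subset hsub
      have hσcard : hσfin.toFinset.card ≤ n := by
        have h1 : hσfin.toFinset ⊆ h.toFinset.erase a := by
          intro x hx
          simp only [Set.Finite.mem_toFinset] at hx
          have := hsub hx
          simp only [Set.mem_diff, Set.mem_singleton_iff] at this
          simp [Finset.mem_erase, this.2, this.1]
        have h2 := Finset.card_le_card h1
        have h3 : a ∈ h.toFinset := by simp [ha]
        have h4 := Finset.card_erase_of_mem h3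
        omega
      have hσI : ∀ b ∈ I, σ b = b := by
        intro b hb
        by_cases hba : b = a
        · exact hba ▸ hσa
        · exact hσfix b (hI b hb) hba
      have hdecomp : ⇑π = ⇑τ ∘ ⇑σ := by
        funext x
        simp [hσ, hτ]
      have hτcomm := hcomm a (π a) haI hpaI
      calc f (⇑π ∘ s) (⇑π ∘ p)
          = f (⇑τ ∘ (⇑σ ∘ s)) (⇑τ ∘ (⇑σ ∘ p)) := by
            rw [hdecomp]; rfl
        _ = ⇑τ ∘ f (⇑σ ∘ s) (⇑σ ∘ p) := hτcomm _ _
        _ = ⇑τ ∘ (⇑σ ∘ f s p) := by rw [ih σ hσfin hσcard hσI s p]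
        _ = ⇑π ∘ f s p := by rw [hdecomp, Function.comp_assoc]

private lemma reach_perm {ι κ : Type*} (I : Set ℕ)
    (f : (ι → ℕ) → (κ → ℕ) → (ι → ℕ))
    (hcomm : ∀ x y : ℕ, x ∉ I → y ∉ I → ∀ (s : ι → ℕ) (p : κ → ℕ),
      f ((Equiv.swap x y) ∘ s) ((Equiv.swap x y) ∘ p) =
        (Equiv.swap x y) ∘ f s p)
    (π : Equiv.Perm ℕ) (h : {a | π a ≠ a}.Finite) (hI : ∀ a ∈ I, π a = a)
    {s t : ι → ℕ} (hr : ReachFrom f s t) :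
    ReachFrom f (⇑π ∘ s) (⇑π ∘ t) := by
  induction hr with
  | refl => exact ReachFrom.refl
  | step p hr ih =>
    have hk := key_comm I f hcomm h.toFinset.card π h le_rfl hI
    rw [← hk]
    exact ReachFrom.step _ ih

/-- If the transition function commutes with every swap of two addresses
outside the implicit set `I` (acting on both states and actions), and the
`1`-universal property `φ` is address-oblivious apart from guards over literals
in `I` (so `φ` is invariant under every finitely supported permutation of `ℕ`
fixing `I` pointwise), then safety is preserved under relabeling of
non-implicit addresses: for every such permutation `π` and every state `s`,
`s` can reach a violation of `φ` iff `π(s)` can reach a violation of `φ`. -/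
theorem stmt_14 {ι κ : Type*} (I : Set ℕ)
    (f : (ι → ℕ) → (κ → ℕ) → (ι → ℕ)) (φ : (ι → ℕ) → Prop)
    (hcomm : ∀ x y : ℕ, x ∉ I → y ∉ I → ∀ (s : ι → ℕ) (p : κ → ℕ),
      f ((Equiv.swap x y) ∘ s) ((Equiv.swap x y) ∘ p) =
        (Equiv.swap x y) ∘ f s p)
    (hφ : ∀ π : Equiv.Perm ℕ, {a | π a ≠ a}.Finite → (∀ a ∈ I, π a = a) →
      ∀ s : ι → ℕ, (φ (⇑π ∘ s) ↔ φ s)) :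
    ∀ π : Equiv.Perm ℕ, {a | π a ≠ a}.Finite → (∀ a ∈ I, π a = a) →
      ∀ s : ι → ℕ,
        (∃ t, ReachFrom f s t ∧ ¬ φ t) ↔
        (∃ t, ReachFrom f (⇑π ∘ s) t ∧ ¬ φ t) := by
  intro π h hI s
  have hinvfin : {a | π⁻¹ a ≠ a}.Finite := by
    apply h.subset
    intro a ha hpa
    exact ha (π.injective (by simp [hpa]))
  have hinvI : ∀ a ∈ I, π⁻¹ a = a := by
    intro a haI
    have := hI a haI
    exact π.injective (by simp [this])
  constructor
  · rintro ⟨t, hr, hv⟩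
    refine ⟨⇑π ∘ t, reach_perm I f hcomm π h hI hr, ?_⟩
    rw [hφ π h hI t]
    exact hv
  · rintro ⟨t, hr, hv⟩
    refine ⟨⇑π⁻¹ ∘ t, ?_, ?_⟩
    · have := reach_perm I f hcomm π⁻¹ hinvfin hinvI hr
      have heq : ⇑π⁻¹ ∘ (⇑π ∘ s) = s := by
        funext x; simp
      rwa [heq] at this
    · rw [hφ π⁻¹ hinvfin hinvI t]
      exact hv
end

section
/- In the Auction transition system instrumented with a sum field, the invariant 'leadingBid ≤ _sum' is inductive under the interference-augmented semantics: assuming each individual bid b satisfies the split predicate (b ≤ leadingBid) ∧ (b ≠ leadingBid → b + leadingBid ≤ _sum), every transition (bid, withdraw, stop) from a state satisfying leadingBid ≤ _sum leads to a state satisfying leadingBid ≤ _sum. -/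
/-- State of the sum-instrumented Auction with a single representative user:
the leading bid, the instrumented sum of all bids, the stopped flag, and the
representative user's bid `b`. -/
structure IState where
  leadingBid : ℕ
  sum : ℕ
  stopped : Bool
  b : ℕ

/-- The split interference predicate for the representative bid:
`b ≤ leadingBid`, and if `b ≠ leadingBid` then `b + leadingBid ≤ _sum`. -/
def θU (s : IState) : Prop :=
  s.b ≤ s.leadingBid ∧ (s.b ≠ s.leadingBid → s.b + s.leadingBid ≤ s.sum)

/-- `bid(amount)`: requires `¬stopped` and `amount > leadingBid`; updates
`_sum := _sum + amount - b`, `b := amount`, `leadingBid := amount`. -/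
def ibidT (amount : ℕ) (s : IState) : IState :=
  if s.stopped = false ∧ amount > s.leadingBid then
    { leadingBid := amount, sum := s.sum + amount - s.b, stopped := s.stopped,
      b := amount }
  else s

/-- `withdraw`: requires `¬stopped` and `b ≠ leadingBid`; updates
`_sum := _sum - b` and `b := 0`. -/
def iwithdrawT (s : IState) : IState :=
  if s.stopped = false ∧ s.b ≠ s.leadingBid then
    { s with sum := s.sum - s.b, b := 0 }
  else s

/-- `stop`: sets `stopped := true`. -/
def istopT (s : IState) : IState :=
  { s with stopped := true }

/-- One transition of the instrumented Auction. -/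
def IStep (s s' : IState) : Prop :=
  (∃ amount, s' = ibidT amount s) ∨ s' = iwithdrawT s ∨ s' = istopT s

/-- The invariant `leadingBid ≤ _sum` is inductive under the
interference-augmented semantics: assuming the representative bid satisfies the
split predicate `θU`, every transition (bid, withdraw, stop) from a state with
`leadingBid ≤ _sum` leads to a state with `leadingBid ≤ _sum`. -/
theorem stmt_16 (s s' : IState) (hθ : θU s)
    (hinv : s.leadingBid ≤ s.sum) (hstep : IStep s s') :
    s'.leadingBid ≤ s'.sum := by
  obtain ⟨hb, hbs⟩ := hθ
  rcases hstep with ⟨a, rfl⟩ | rfl | rfl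
  · unfold ibidT
    split
    · next h => simp; omega
    · simpa using hinv
  · unfold iwithdrawT
    split
    · next h => simp; omega
    · simpa using hinv
  · simpa [istopT] using hinv
end

section
/- If (E, T, I) over-approximates the participation topology of every transaction of a contract and a does not appear in view(E,T,I,s,p) = {client(p,i) | i ∈ E} ∪ {role(s,i) | i ∈ T} ∪ I, then applying the transaction f_p at state (s,u) leaves every user with address a unchanged. -/
section
variable {C U P : Type*} {N : ℕ} (idU : U → ℕ)
variable (client : P → ℕ → ℕ) (role : C → ℕ → ℕ)
variable (f : P → C × (Fin N → U) → C × (Fin N → U))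

/-- Address `a` influences the transaction `f_p`, witnessed by control state
`s`: two user configurations differing exactly in the user with address `a`
have images under `f_p` differing in the control state or in another user. -/
def InflWitness (p : P) (a : ℕ) (s : C) : Prop :=
  ∃ (u v : Fin N → U) (i : Fin N),
    idU (u i) = a ∧
    (∀ j, u j = v j ↔ i ≠ j) ∧
    ((f p (s, u)).1 = (f p (s, v)).1 →
      ∃ j, j ≠ i ∧ (f p (s, u)).2 j ≠ (f p (s, v)).2 j)

/-- The transaction `f_p` influences address `a`, witnessed by control state
`s`: applying `f_p` at `s` changes the user with address `a`. -/
def InfldWitness (p : P) (a : ℕ) (s : C) : Prop :=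
  ∃ (u : Fin N → U) (i : Fin N), idU (u i) = a ∧ (f p (s, u)).2 i ≠ u i

/-- Address `a` participates in `f_p` with witness state `s`. -/
def PartWitness (p : P) (a : ℕ) (s : C) : Prop :=
  InflWitness idU f p a s ∨ InfldWitness idU f p a s

/-- `(E, T, I)` over-approximates the participation topology of every
transaction: client indices of explicit participants lie in `E`, role indices
of transient participants lie in `T`, and implicit participants lie in `I`. -/
def OverApprox (E T I : Set ℕ) : Prop :=
  (∀ (p : P) (i : ℕ) (a : ℕ),
    ((∃ s, PartWitness idU f p a s) ∧ client p i = a) → i ∈ E) ∧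
  (∀ (p : P) (i : ℕ) (a : ℕ),
    (∃ s, PartWitness idU f p a s ∧ role s i = a) → i ∈ T) ∧
  (∀ (p : P) (a : ℕ),
    (∃ s, PartWitness idU f p a s ∧ ∀ i, role s i ≠ a ∧ client p i ≠ a) →
      a ∈ I)

/-- The view of `(E, T, I)` at state `s` and action `p`:
`{client(p,i) | i ∈ E} ∪ {role(s,i) | i ∈ T} ∪ I`. -/
def view (E T I : Set ℕ) (s : C) (p : P) : Set ℕ :=
  {x | ∃ i ∈ E, client p i = x} ∪ {x | ∃ i ∈ T, role s i = x} ∪ I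

/-- If `(E, T, I)` over-approximates the participation topology of every
transaction and `a ∉ view(E, T, I, s, p)`, then applying the transaction `f_p`
at `(s, u)` leaves every user with address `a` unchanged. -/
theorem stmt_19 (E T I : Set ℕ)
    (hover : OverApprox idU client role f E T I)
    (s : C) (p : P) (u : Fin N → U) (a : ℕ)
    (hnotin : a ∉ view client role E T I s p) :
    ∀ i : Fin N, idU (u i) = a → (f p (s, u)).2 i = u i := by
  intro i hid
  by_contra hne
  have hpart : PartWitness idU f p a s := Or.inr ⟨u, i, hid, hne⟩
  obtain ⟨hE, hT, hI⟩ := hover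
  by_cases hc : ∃ j, client p j = a
  · obtain ⟨j, hj⟩ := hc
    exact hnotin (Or.inl (Or.inl ⟨j, hE p j a ⟨⟨s, hpart⟩, hj⟩, hj⟩))
  · by_cases hr : ∃ j, role s j = a
    · obtain ⟨j, hj⟩ := hr
      exact hnotin (Or.inl (Or.inr ⟨j, hT p j a ⟨s, hpart, hj⟩, hj⟩))
    · push_neg at hc hr
      exact hnotin (Or.inr (hI p a ⟨s, hpart, fun j => ⟨hr j, hc j⟩⟩))

end
end
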